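/- Let τ > 0, θ ∈ ℝ, δ > 0, n ∈ ℕ, and let W : Fin n → ℝ and t : Fin n → ℝ satisfy ∑_j W_j · exp(t_j/τ) > 0, ∑_j W_j − θ ≥ δ, and t_j ≤ T(t,W) for all j, where T(t,W) := τ · log((∑_j W_j · exp(t_j/τ)) / (∑_j W_j − θ)). Then for every index k, the partial derivative of T with respect to the weight W_k, which equals τ · (exp(t_k/τ) / (∑_j W_j · exp(t_j/τ)) − 1 / (∑_j W_j − θ)), has absolute value at most τ/δ. -/

import Mathlib

open Real Finset

/-- Within a causal piece, the partial derivative of the nLIF output spike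
time `T(t,W) = τ * log ((∑ j, W j * exp (t j / τ)) / (∑ j, W j - θ))` with respect to the
weight `W k` equals `τ * (exp (t k / τ) / (∑ j, W j * exp (t j / τ)) - 1 / (∑ j, W j - θ))`,
and its absolute value is bounded by `τ / δ`. -/
theorem nLIF_spike_time_deriv_weight_bound
    (τ θ δ : ℝ) (hτ : 0 < τ) (hδ : 0 < δ)
    (n : ℕ) (W t : Fin n → ℝ)
    (hA : 0 < ∑ j, W j * Real.exp (t j / τ))
    (hB : δ ≤ (∑ j, W j) - θ)
    (hle : ∀ j, t j ≤ τ * Real.log ((∑ j, W j * Real.exp (t j / τ)) / ((∑ j, W j) - θ)))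
    (k : Fin n) :
    HasDerivAt
      (fun w : ℝ => τ * Real.log
        ((∑ j, Function.update W k w j * Real.exp (t j / τ)) /
          ((∑ j, Function.update W k w j) - θ)))
      (τ * (Real.exp (t k / τ) / (∑ j, W j * Real.exp (t j / τ)) - 1 / ((∑ j, W j) - θ)))
      (W k) ∧
    |τ * (Real.exp (t k / τ) / (∑ j, W j * Real.exp (t j / τ)) - 1 / ((∑ j, W j) - θ))|
      ≤ τ / δ := by
  set g : Fin n → ℝ := fun j => Real.exp (t j / τ) with hg
  set A : ℝ := ∑ j, W j * g j with hAdef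
  set B : ℝ := (∑ j, W j) - θ with hBdef
  have hBpos : 0 < B := lt_of_lt_of_le hδ hB
  have hgpos : ∀ j, 0 < g j := fun j => Real.exp_pos _
  -- rewrite sums as affine functions of w
  have hAform : ∀ w : ℝ, (∑ j, Function.update W k w j * g j)
      = w * g k + ∑ j ∈ univ.erase k, W j * g j := by
    intro w
    rw [← Finset.add_sum_erase _ _ (Finset.mem_univ k)]
    congr 1
    · simp
    · exact Finset.sum_congr rfl fun j hj => by
        rw [Function.update_of_ne (Finset.ne_of_mem_erase hj)]
  have hBform : ∀ w : ℝ, ((∑ j, Function.update W k w j) - θ)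
      = w + ((∑ j ∈ univ.erase k, W j) - θ) := by
    intro w
    rw [← Finset.add_sum_erase _ _ (Finset.mem_univ k)]
    have : ∀ j ∈ univ.erase k, Function.update W k w j = W j := fun j hj =>
      Function.update_of_ne (Finset.ne_of_mem_erase hj) _ _
    rw [Finset.sum_congr rfl this, Function.update_self]
    ring
  have hAval : (W k) * g k + ∑ j ∈ univ.erase k, W j * g j = A := by
    rw [hAdef, ← Finset.add_sum_erase _ _ (Finset.mem_univ k)]
  have hBval : (W k) + ((∑ j ∈ univ.erase k, W j) - θ) = B := by
    rw [hBdef, ← Finset.add_sum_erase _ _ (Finset.mem_univ k)]; ring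
  have hA' : HasDerivAt (fun w : ℝ => ∑ j, Function.update W k w j * g j) (g k) (W k) := by
    simp only [hAform]
    simpa using (hasDerivAt_mul_const (g k)).add_const (∑ j ∈ univ.erase k, W j * g j)
  have hB' : HasDerivAt (fun w : ℝ => (∑ j, Function.update W k w j) - θ) 1 (W k) := by
    simp only [hBform]
    simpa using (hasDerivAt_id (W k)).add_const ((∑ j ∈ univ.erase k, W j) - θ)
  have hBne : ((∑ j, Function.update W k (W k) j) - θ) ≠ 0 := by
    rw [hBform, hBval]; exact ne_of_gt hBpos
  have hdiv := hA'.div hB' hBne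
  have hval1 : (∑ j, Function.update W k (W k) j * g j) = A := by
    rw [hAform, hAval]
  have hval2 : ((∑ j, Function.update W k (W k) j) - θ) = B := by
    rw [hBform, hBval]
  rw [hval1, hval2] at hdiv
  have hABne : A / B ≠ 0 := ne_of_gt (div_pos hA hBpos)
  have hlog := hdiv.log (by simp only [Pi.div_apply]; rw [hval1, hval2]; exact hABne)
  have hfinal := hlog.const_mul τ
  simp only [Pi.div_apply] at hfinal
  have hderiv : HasDerivAt
      (fun w : ℝ => τ * Real.log
        ((∑ j, Function.update W k w j * g j) /
          ((∑ j, Function.update W k w j) - θ)))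
      (τ * (g k / A - 1 / B)) (W k) := by
    refine hfinal.congr_deriv ?_
    rw [hval1, hval2]
    field_simp
  refine ⟨hderiv, ?_⟩
  -- bound
  have hkey : g k ≤ A / B := by
    have h1 : t k / τ ≤ Real.log (A / B) := by
      have := hle k
      rw [div_le_iff₀' hτ]
      linarith [this]
    calc g k = Real.exp (t k / τ) := rfl
      _ ≤ Real.exp (Real.log (A / B)) := Real.exp_le_exp.2 h1
      _ = A / B := Real.exp_log (div_pos hA hBpos)
  have h2 : g k / A ≤ 1 / B := by
    rw [div_le_div_iff₀ hA hBpos]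
    have := (le_div_iff₀ hBpos).mp hkey
    linarith
  have h3 : |g k / A - 1 / B| ≤ 1 / δ := by
    rw [abs_sub_comm, abs_of_nonneg (by linarith)]
    have : 1 / B ≤ 1 / δ := one_div_le_one_div_of_le hδ (by linarith)
    have hgA : 0 < g k / A := div_pos (hgpos k) hA
    linarith
  calc |τ * (g k / A - 1 / B)| = τ * |g k / A - 1 / B| := by
        rw [abs_mul, abs_of_pos hτ]
    _ ≤ τ * (1 / δ) := by exact mul_le_mul_of_nonneg_left h3 (le_of_lt hτ)
    _ = τ / δ := by ring
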